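/- For every monoid H, the restricted finitary power monoid P_{fin,×}(H) is Dedekind-finite; moreover, the finitary power monoid P_fin(H) is Dedekind-finite if and only if H is Dedekind-finite. -/
import Mathlib


open scoped Pointwise

/-- Two-sided divisibility in a monoid: `x` divides `y` if `y = u * x * v` for some `u, v`. -/
def DvdTS {M : Type*} [Monoid M] (x y : M) : Prop := ∃ u v : M, y = u * x * v

/-- A unit-divisor is a divisor of the identity. -/
def IsUnitDivisor {M : Type*} [Monoid M] (x : M) : Prop := DvdTS x 1

/-- `x` is a proper divisor of `y` if `x` divides `y` but `y` does not divide `x`. -/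
def IsProperDivisorTS {M : Type*} [Monoid M] (x y : M) : Prop := DvdTS x y ∧ ¬ DvdTS y x

/-- An atom is a non-unit that is not a product of two non-units. -/
def IsAtomTS {M : Type*} [Monoid M] (a : M) : Prop :=
  ¬ IsUnit a ∧ ∀ b c : M, a = b * c → IsUnit b ∨ IsUnit c

/-- A quark is a non-unit-divisor all of whose proper divisors are unit-divisors. -/
def IsQuarkTS {M : Type*} [Monoid M] (a : M) : Prop :=
  ¬ IsUnitDivisor a ∧ ∀ b : M, IsProperDivisorTS b a → IsUnitDivisor b

/-- An irreducible is a non-unit-divisor with no factorization `a = b * c` into proper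
divisors that are not unit-divisors. -/
def IsIrredTS {M : Type*} [Monoid M] (a : M) : Prop :=
  ¬ IsUnitDivisor a ∧
    ¬ ∃ b c : M, a = b * c ∧ IsProperDivisorTS b a ∧ IsProperDivisorTS c a ∧
      ¬ IsUnitDivisor b ∧ ¬ IsUnitDivisor c

def DedekindFiniteM (M : Type*) [Monoid M] : Prop := ∀ x y : M, x * y = 1 → y * x = 1

/-- ACC on principal two-sided ideals: no infinite sequence of consecutive proper divisors. -/
def ACCPrincipalTS (M : Type*) [Monoid M] : Prop :=
  ¬ ∃ f : ℕ → M, ∀ n : ℕ, IsProperDivisorTS (f (n + 1)) (f n)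

/-- Factorable: every non-unit-divisor is a (non-empty) product of irreducibles. -/
def FactorableM (M : Type*) [Monoid M] : Prop :=
  ∀ x : M, ¬ IsUnitDivisor x →
    ∃ l : List M, l ≠ [] ∧ (∀ a ∈ l, IsIrredTS a) ∧ l.prod = x

/-- Atomic: every non-unit-divisor is a (non-empty) product of atoms. -/
def AtomicM (M : Type*) [Monoid M] : Prop :=
  ∀ x : M, ¬ IsUnitDivisor x →
    ∃ l : List M, l ≠ [] ∧ (∀ a ∈ l, IsAtomTS a) ∧ l.prod = x

/-- The finitary power monoid: non-empty finite subsets of `H` under setwise multiplication. -/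
def PfinM (H : Type*) [Monoid H] : Submonoid (Set H) where
  carrier := {X : Set H | X.Finite ∧ X.Nonempty}
  mul_mem' := fun hX hY => ⟨hX.1.mul hY.1, hX.2.mul hY.2⟩
  one_mem' := ⟨Set.finite_one, 1, Set.mem_one.mpr rfl⟩

/-- The restricted finitary power monoid: non-empty finite subsets of `H` containing a unit. -/
def PfinTimes (H : Type*) [Monoid H] : Submonoid (Set H) where
  carrier := {X : Set H | X.Finite ∧ ∃ u ∈ X, IsUnit u}
  mul_mem' := by
    rintro X Y ⟨hXf, u, hu, hu'⟩ ⟨hYf, v, hv, hv'⟩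
    exact ⟨hXf.mul hYf, u * v, Set.mul_mem_mul hu hv, hu'.mul hv'⟩
  one_mem' := ⟨Set.finite_one, 1, Set.mem_one.mpr rfl, isUnit_one⟩

/-- The reduced finitary power monoid: finite subsets of `H` containing `1`. -/
def PfinOne (H : Type*) [Monoid H] : Submonoid (Set H) where
  carrier := {X : Set H | X.Finite ∧ (1 : H) ∈ X}
  mul_mem' := by
    rintro X Y ⟨hXf, hX1⟩ ⟨hYf, hY1⟩
    exact ⟨hXf.mul hYf, by simpa using Set.mul_mem_mul hX1 hY1⟩
  one_mem' := ⟨Set.finite_one, Set.mem_one.mpr rfl⟩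

lemma mem_PfinM {H : Type*} [Monoid H] {X : Set H} :
    X ∈ PfinM H ↔ X.Finite ∧ X.Nonempty := Iff.rfl

lemma mem_PfinTimes {H : Type*} [Monoid H] {X : Set H} :
    X ∈ PfinTimes H ↔ X.Finite ∧ ∃ u ∈ X, IsUnit u := Iff.rfl

lemma mem_PfinOne {H : Type*} [Monoid H] {X : Set H} :
    X ∈ PfinOne H ↔ X.Finite ∧ (1 : H) ∈ X := Iff.rfl

/-- Acyclic: `u * x * v ≠ x` whenever `u` or `v` is a non-unit. -/
def AcyclicM (M : Type*) [Monoid M] : Prop :=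
  ∀ u v x : M, (¬ IsUnit u ∨ ¬ IsUnit v) → u * x * v ≠ x

/-- Unit-cancellative: `x * y ≠ x ≠ y * x` whenever `y` is a non-unit. -/
def UnitCancellativeM (M : Type*) [Monoid M] : Prop :=
  ∀ x y : M, ¬ IsUnit y → x * y ≠ x ∧ y * x ≠ x

/-- Strongly unit-cancellative: `x * y ≠ x ≠ y * x` whenever `y ≠ 1`. -/
def StrongUnitCancellativeM (M : Type*) [Monoid M] : Prop :=
  ∀ x y : M, y ≠ 1 → x * y ≠ x ∧ y * x ≠ x

/-- Torsion-free: the identity is the only element with finitely many powers. -/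
def TorsionFreeM (M : Type*) [Monoid M] : Prop :=
  ∀ x : M, (Set.range fun k : ℕ => x ^ k).Finite → x = 1

/-- Cancellative monoid. -/
def CancellativeM (M : Type*) [Monoid M] : Prop :=
  ∀ a x y : M, (a * x = a * y → x = y) ∧ (x * a = y * a → x = y)

/-- The set of lengths of (irreducible) factorizations of `x`, with the conventions
`L(1) = {0}` and `L(u) = ∅` for a unit-divisor `u ≠ 1`. -/
def LengthSet {M : Type*} [Monoid M] (x : M) : Set ℕ :=
  {n | (x = 1 ∧ n = 0) ∨
    (¬ IsUnitDivisor x ∧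
      ∃ l : List M, l.length = n ∧ l ≠ [] ∧ (∀ a ∈ l, IsIrredTS a) ∧ l.prod = x)}

/-- The system of lengths: the family of non-empty length sets. -/
def SystemOfLengths (M : Type*) [Monoid M] : Set (Set ℕ) :=
  {L | L.Nonempty ∧ ∃ x : M, LengthSet x = L}

/-- `P_{fin,×}(H)` is always Dedekind-finite, and `P_fin(H)` is Dedekind-finite
iff `H` is. -/
lemma pair_mul_one {H : Type*} [Monoid H] {X Y : Set H} (h : X * Y = 1) :
    ∀ x ∈ X, ∀ y ∈ Y, x * y = 1 := by
  intro x hx y hy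
  have := Set.mul_mem_mul hx hy
  rw [h] at this
  exact this

lemma singletons_mul_one {H : Type*} [Monoid H] {X Y : Set H} {a b : H}
    (ha : a ∈ X) (hb : b ∈ Y) (hX : ∀ x ∈ X, x = a) (hY : ∀ y ∈ Y, y = b)
    (hab : b * a = 1) : Y * X = 1 := by
  ext z
  simp only [Set.mem_one]
  constructor
  · rintro ⟨y, hy, x, hx, rfl⟩
    show y * x = 1
    rw [hY y hy, hX x hx, hab]
  · rintro rfl
    rw [← hab]
    exact Set.mul_mem_mul hb ha

theorem dedekind_finiteness_of_power_monoids (H : Type*) [Monoid H] :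
    DedekindFiniteM (PfinTimes H) ∧ (DedekindFiniteM (PfinM H) ↔ DedekindFiniteM H) := by
  constructor
  · intro X Y h
    have hXY : (X : Set H) * (Y : Set H) = 1 := congrArg Subtype.val h
    obtain ⟨hXf, u, huX, huU⟩ := X.2
    obtain ⟨hYf, v, hvY, hvU⟩ := Y.2
    have key := pair_mul_one hXY
    set v' := hvU.unit with hv'
    have hvv : (v' : H) = v := hvU.unit_spec
    -- every x ∈ X equals ↑v'⁻¹
    have hX : ∀ x ∈ (X : Set H), x = (v'⁻¹ : Units H) := by
      intro x hx
      have h1 : x * v = 1 := key x hx v hvY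
      calc x = x * v * (v'⁻¹ : Units H) := by rw [← hvv, mul_assoc]; simp
        _ = (v'⁻¹ : Units H) := by rw [h1, one_mul]
    have huv : u = (v'⁻¹ : Units H) := hX u huX
    -- every y ∈ Y equals v
    have hY : ∀ y ∈ (Y : Set H), y = v := by
      intro y hy
      have h1 : u * y = 1 := key u huX y hy
      have : (v' : H) * (u * y) = v' := by rw [h1, mul_one]
      rw [huv] at this
      rw [Units.mul_inv_cancel_left] at this
      rw [this, hvv]
    have hv'X : ((v'⁻¹ : Units H) : H) ∈ (X : Set H) := huv ▸ huX
    have : (Y : Set H) * (X : Set H) = 1 :=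
      singletons_mul_one hv'X hvY hX hY (by rw [← hvv]; simp)
    exact Subtype.ext this
  · constructor
    · intro hP x y hxy
      have h1 : ({x} : Set H) ∈ PfinM H := ⟨Set.finite_singleton x, x, rfl⟩
      have h2 : ({y} : Set H) ∈ PfinM H := ⟨Set.finite_singleton y, y, rfl⟩
      have hmul : (⟨{x}, h1⟩ : PfinM H) * ⟨{y}, h2⟩ = 1 := by
        apply Subtype.ext
        show ({x} : Set H) * {y} = 1
        rw [Set.singleton_mul_singleton, hxy]
        rfl
      have := congrArg Subtype.val (hP _ _ hmul)
      have : ({y} : Set H) * {x} = 1 := this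
      rw [Set.singleton_mul_singleton] at this
      have := Set.singleton_eq_singleton_iff.mp this
      exact this
    · intro hH X Y h
      have hXY : (X : Set H) * (Y : Set H) = 1 := congrArg Subtype.val h
      obtain ⟨hXf, x0, hx0⟩ := X.2
      obtain ⟨hYf, y0, hy0⟩ := Y.2
      have key := pair_mul_one hXY
      have hyx : y0 * x0 = 1 := hH x0 y0 (key x0 hx0 y0 hy0)
      have hX : ∀ x ∈ (X : Set H), x = x0 := by
        intro x hx
        calc x = x * (y0 * x0) := by rw [hyx, mul_one]
          _ = (x * y0) * x0 := by rw [mul_assoc]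
          _ = x0 := by rw [key x hx y0 hy0, one_mul]
      have hY : ∀ y ∈ (Y : Set H), y = y0 := by
        intro y hy
        calc y = (y0 * x0) * y := by rw [hyx, one_mul]
          _ = y0 * (x0 * y) := by rw [mul_assoc]
          _ = y0 := by rw [key x0 hx0 y hy, mul_one]
      exact Subtype.ext (singletons_mul_one hx0 hy0 hX hY hyx)
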